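/- Suppose every joint action occurs infinitely often along the play, let ε ≥ 0, c ≥ 0, and let v : A → B → ℝ. Assume: (i) for all a ∈ A, b ∈ B, limsup_{m→∞} |s̄_{ab}(m) − v a b| ≤ cε; (ii) for all a ∈ A, b ∈ B, limsup_{m→∞} |s̃_{ab}(m) − s̄_{ab}(m)| ≤ ε (unbiased payoff observations along this play); (iii) the observed regret satisfies limsup_{T→∞} R(T)/T ≤ ε. Then the regret with respect to the values v satisfies limsup_{T→∞} (1/T)(max_{a∈A} ∑_{t=1}^T v a (j t) − ∑_{t=1}^T v (i t) (j t)) ≤ 2(c+1)ε; in particular the choices of player 1 are 2(c+1)ε-Hannan consistent with respect to the matrix game v. (Proposition 13.) -/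

import Mathlib

open Finset Filter

namespace Prop13

set_option linter.unusedSectionVars false
set_option maxHeartbeats 1000000

variable {A B : Type*} [Fintype A] [Fintype B] [DecidableEq A] [DecidableEq B]
variable (i : ℕ → A) (j : ℕ → B)

def P (a : A) (b : B) : ℕ → Prop := fun t => 1 ≤ t ∧ i t = a ∧ j t = b

instance (a : A) (b : B) : DecidablePred (P i j a b) := fun t => by
  unfold P; infer_instance

lemma count_P (a : A) (b : B) (t : ℕ) :
    Nat.count (P i j a b) t = #((Icc 1 (t-1)).filter fun u => i u = a ∧ j u = b) := by
  rw [Nat.count_eq_card_filter_range]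
  apply congrArg Finset.card
  ext u
  rw [Finset.mem_filter, Finset.mem_filter]
  simp only [Finset.mem_filter, Finset.mem_range, Finset.mem_Icc, P]
  constructor
  · rintro ⟨h1, h2, h3, h4⟩; exact ⟨⟨h2, by omega⟩, h3, h4⟩
  · rintro ⟨⟨h1, h2⟩, h3, h4⟩; exact ⟨by omega, h1, h3, h4⟩

lemma sum_Icc_one (f : ℕ → ℝ) (m : ℕ) :
    ∑ k ∈ Icc 1 m, f k = ∑ k ∈ range m, f (k+1) := by
  induction m with
  | zero => simp
  | succ m ih => rw [Finset.sum_Icc_succ_top (by omega), ih, Finset.sum_range_succ]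

lemma sum_actual (g : A → B → ℕ → ℝ) (T : ℕ) :
    ∑ t ∈ Icc 1 T, g (i t) (j t) (Nat.count (P i j (i t) (j t)) t + 1)
      = ∑ a : A, ∑ b : B, ∑ k ∈ Icc 1 (Nat.count (P i j a b) (T+1)), g a b k := by
  induction T with
  | zero =>
    have h0 : ∀ a b, Nat.count (P i j a b) 1 = 0 := by
      intro a b
      rw [Nat.count_one, if_neg]
      simp [P]
    simp [h0]
  | succ T ih =>
    have hcnt : ∀ a b, Nat.count (P i j a b) (T+1+1) = Nat.count (P i j a b) (T+1)
        + (if a = i (T+1) ∧ b = j (T+1) then 1 else 0) := by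
      intro a b
      rw [Nat.count_succ]
      congr 1
      by_cases h : a = i (T+1) ∧ b = j (T+1)
      · rw [if_pos h, if_pos ⟨by omega, h.1.symm, h.2.symm⟩]
      · rw [if_neg h, if_neg]
        rintro ⟨-, h2, h3⟩
        exact h ⟨h2.symm, h3.symm⟩
    rw [Finset.sum_Icc_succ_top (by omega : 1 ≤ T+1), ih]
    have key : ∀ a b, ∑ k ∈ Icc 1 (Nat.count (P i j a b) (T+1+1)), g a b k
        = (∑ k ∈ Icc 1 (Nat.count (P i j a b) (T+1)), g a b k)
          + (if a = i (T+1) ∧ b = j (T+1) then g a b (Nat.count (P i j a b) (T+1) + 1) else 0) := by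
      intro a b
      rw [hcnt a b]
      by_cases h : a = i (T+1) ∧ b = j (T+1)
      · rw [if_pos h, if_pos h, Finset.sum_Icc_succ_top (by omega)]
      · rw [if_neg h, if_neg h, add_zero, add_zero]
    simp only [key, Finset.sum_add_distrib]
    congr 1
    symm
    simp [ite_and, Finset.sum_ite_eq']
lemma fiber_bound (a : A) (b : B) (hp : (setOf (P i j a b)).Infinite)
    (σ : ℕ → ℝ) (w : ℕ → ℝ) (vv η C : ℝ) (hη : 0 ≤ η) (hC : 0 ≤ C)
    (hwge : ∀ k, 1 ≤ k → 1 ≤ w k)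
    (hσ : ∀ k, 1 ≤ k → |vv - σ k| ≤ |vv| + 1)
    (hw0 : w 1 = 1 + #((Icc 0 (Nat.nth (P i j a b) 0)).filter fun u => j u = b ∧ i u ≠ a))
    (hwS : ∀ k, 1 ≤ k → w (k+1) = 1 +
      #((Icc (Nat.nth (P i j a b) (k-1)) (Nat.nth (P i j a b) k)).filter
        fun u => j u = b ∧ i u ≠ a))
    (hF : ∀ m, ∑ k ∈ range m, w (k+1) * (vv - σ (k+1))
        ≤ η * (∑ k ∈ range m, w (k+1)) + C)
    (T : ℕ) :
    ∑ t ∈ (Icc 1 T).filter (fun t => j t = b), (vv - σ (Nat.count (P i j a b) t + 1))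
      ≤ η * ((#((Icc 1 T).filter fun t => j t = b) : ℝ) + 1) + C + (|vv| + 1) := by
  set p := P i j a b with hpdef
  set K := Nat.count p (T+1) with hK
  set S := (Icc 1 T).filter (fun t => j t = b) with hS
  set V : ℕ → ℕ := fun k => #(S.filter fun t => Nat.count p t = k) with hV
  have hnth_mem : ∀ k, p (Nat.nth p k) := fun k => Nat.nth_mem_of_infinite hp k
  have hp1nth : ∀ k, 1 ≤ Nat.nth p k := fun k => (hnth_mem k).1
  have hcle : ∀ (t k : ℕ), Nat.count p t ≤ k ↔ t ≤ Nat.nth p k :=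
    fun t k => Nat.count_le_iff_le_nth hp
  have hclt : ∀ (t k : ℕ), k < Nat.count p t ↔ Nat.nth p k < t :=
    fun t k => Nat.lt_nth_iff_count_lt hp
  have hia : ∀ t k, 1 ≤ t → j t = b → Nat.count p t = k → t ≠ Nat.nth p k → i t ≠ a := by
    intro t k h1 hjb hcnt hne hit
    have hpt : p t := ⟨h1, hit, hjb⟩
    have h2 := Nat.nth_count hpt
    rw [hcnt] at h2
    exact hne h2.symm
  have hmap : ∀ t ∈ S, Nat.count p t ∈ range (K+1) := by
    intro t ht
    simp only [hS, Finset.mem_filter, Finset.mem_Icc] at ht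
    refine Finset.mem_range.mpr ?_
    have := Nat.count_monotone p (show t ≤ T+1 by omega)
    omega
  have hfib : ∀ f : ℕ → ℝ, ∑ t ∈ S, f (Nat.count p t) = ∑ k ∈ range (K+1), (V k : ℝ) * f k := by
    intro f
    rw [← Finset.sum_fiberwise_of_maps_to hmap (fun t => f (Nat.count p t))]
    refine Finset.sum_congr rfl fun k _ => ?_
    rw [Finset.sum_congr rfl (g := fun _ => f k) (fun t ht => by
      rw [(Finset.mem_filter.mp ht).2]), Finset.sum_const, nsmul_eq_mul]
  have hMsum : #S = ∑ k ∈ range (K+1), V k := Finset.card_eq_sum_card_fiberwise hmap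
  -- middle cells
  have hVmid : ∀ k, 1 ≤ k → k + 1 ≤ K → (V k : ℝ) = w (k+1) := by
    intro k hk1 hkK
    have hnthT : Nat.nth p k ≤ T := by
      have h := (hclt (T+1) k).mp (by omega)
      omega
    have hset : S.filter (fun t => Nat.count p t = k)
        = insert (Nat.nth p k) ((Icc (Nat.nth p (k-1)) (Nat.nth p k)).filter
            fun u => j u = b ∧ i u ≠ a) := by
      ext t
      simp only [hS, Finset.mem_filter, Finset.mem_Icc, Finset.mem_insert]
      constructor
      · rintro ⟨⟨⟨h1, hT⟩, hjb⟩, hcnt⟩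
        by_cases he : t = Nat.nth p k
        · exact Or.inl he
        · refine Or.inr ⟨⟨?_, (hcle t k).mp (by omega)⟩, hjb, hia t k h1 hjb hcnt he⟩
          have := (hclt t (k-1)).mp (by omega)
          omega
      · rintro (he | ⟨⟨hlo, hhi⟩, hjb, hNa⟩)
        · subst he
          exact ⟨⟨⟨hp1nth k, hnthT⟩, (hnth_mem k).2.2⟩, Nat.count_nth_of_infinite hp k⟩
        · have hne2 : t ≠ Nat.nth p k := fun h => hNa (h ▸ (hnth_mem k).2.1)
          have hne1 : t ≠ Nat.nth p (k-1) := fun h => hNa (h ▸ (hnth_mem (k-1)).2.1)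
          have h1t : 1 ≤ t := le_trans (hp1nth (k-1)) hlo
          have hcnt : Nat.count p t = k := by
            have hup := (hcle t k).mpr hhi
            have hlow := (hclt t (k-1)).mpr (by omega)
            omega
          exact ⟨⟨⟨h1t, le_trans hhi hnthT⟩, hjb⟩, hcnt⟩
    have hnotmem : Nat.nth p k ∉ (Icc (Nat.nth p (k-1)) (Nat.nth p k)).filter
        (fun u => j u = b ∧ i u ≠ a) := by
      simp only [Finset.mem_filter]
      rintro ⟨-, -, hNa⟩
      exact hNa (hnth_mem k).2.1
    show (#(S.filter fun t => Nat.count p t = k) : ℝ) = w (k+1)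
    rw [hset, Finset.card_insert_of_notMem hnotmem, hwS k hk1]
    push_cast
    ring
  -- first cell, upper bound
  have hV0u : (V 0 : ℝ) ≤ w 1 := by
    have hsub : S.filter (fun t => Nat.count p t = 0)
        ⊆ insert (Nat.nth p 0) ((Icc 0 (Nat.nth p 0)).filter fun u => j u = b ∧ i u ≠ a) := by
      intro t ht
      simp only [hS, Finset.mem_filter, Finset.mem_Icc] at ht
      obtain ⟨⟨⟨h1, hT⟩, hjb⟩, hcnt⟩ := ht
      simp only [Finset.mem_insert, Finset.mem_filter, Finset.mem_Icc]
      by_cases he : t = Nat.nth p 0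
      · exact Or.inl he
      · exact Or.inr ⟨⟨Nat.zero_le t, (hcle t 0).mp (by omega)⟩, hjb, hia t 0 h1 hjb hcnt he⟩
    have h1 := le_trans (Finset.card_le_card hsub) (Finset.card_insert_le _ _)
    have h2 : (V 0 : ℝ) ≤ (#((Icc 0 (Nat.nth p 0)).filter fun u => j u = b ∧ i u ≠ a) : ℝ) + 1 := by
      exact_mod_cast h1
    rw [hw0]
    linarith
  -- first cell, lower bound (when K ≥ 1)
  have hV0l : 1 ≤ K → w 1 - 1 ≤ (V 0 : ℝ) := by
    intro hK1
    have hnth0T : Nat.nth p 0 ≤ T := by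
      have := (hclt (T+1) 0).mp (by omega)
      omega
    have hmem0 : Nat.nth p 0 ∈ S.filter (fun t => Nat.count p t = 0) := by
      simp only [hS, Finset.mem_filter, Finset.mem_Icc]
      exact ⟨⟨⟨hp1nth 0, hnth0T⟩, (hnth_mem 0).2.2⟩, Nat.count_nth_of_infinite hp 0⟩
    have hsub : (Icc 0 (Nat.nth p 0)).filter (fun u => j u = b ∧ i u ≠ a)
        ⊆ insert 0 ((S.filter (fun t => Nat.count p t = 0)).erase (Nat.nth p 0)) := by
      intro u hu
      simp only [Finset.mem_filter, Finset.mem_Icc] at hu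
      obtain ⟨⟨-, hui⟩, hjb, hNa⟩ := hu
      simp only [Finset.mem_insert, Finset.mem_erase]
      by_cases h0 : u = 0
      · exact Or.inl h0
      · have hne : u ≠ Nat.nth p 0 := fun h => hNa (h ▸ (hnth_mem 0).2.1)
        refine Or.inr ⟨hne, ?_⟩
        simp only [hS, Finset.mem_filter, Finset.mem_Icc]
        exact ⟨⟨⟨by omega, le_trans hui hnth0T⟩, hjb⟩,
          Nat.le_zero.mp ((hcle u 0).mpr hui)⟩
    have hcard : #((Icc 0 (Nat.nth p 0)).filter fun u => j u = b ∧ i u ≠ a) ≤ V 0 := by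
      have h1 := Finset.card_le_card hsub
      have h2 := Finset.card_insert_le 0 ((S.filter (fun t => Nat.count p t = 0)).erase (Nat.nth p 0))
      have h3 := Finset.card_erase_of_mem hmem0
      have h4 : 1 ≤ V 0 := Finset.card_pos.mpr ⟨_, hmem0⟩
      simp only [hV] at h4 ⊢
      omega
    have h5 : (#((Icc 0 (Nat.nth p 0)).filter fun u => j u = b ∧ i u ≠ a) : ℝ) ≤ (V 0 : ℝ) := by
      exact_mod_cast hcard
    rw [hw0]
    linarith
  -- last (partial) cell
  have hVKle : 1 ≤ K → (V K : ℝ) ≤ w (K+1) := by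
    intro hK1
    have hTnth : T + 1 ≤ Nat.nth p K := (hcle (T+1) K).mp (by omega)
    have hsub : S.filter (fun t => Nat.count p t = K)
        ⊆ (Icc (Nat.nth p (K-1)) (Nat.nth p K)).filter fun u => j u = b ∧ i u ≠ a := by
      intro t ht
      simp only [hS, Finset.mem_filter, Finset.mem_Icc] at ht ⊢
      obtain ⟨⟨⟨h1, hT⟩, hjb⟩, hcnt⟩ := ht
      have hne : t ≠ Nat.nth p K := by omega
      refine ⟨⟨?_, (hcle t K).mp (by omega)⟩, hjb, hia t K h1 hjb hcnt hne⟩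
      have := (hclt t (K-1)).mp (by omega)
      omega
    have h1 := Finset.card_le_card hsub
    have h2 : (V K : ℝ) ≤
        (#((Icc (Nat.nth p (K-1)) (Nat.nth p K)).filter fun u => j u = b ∧ i u ≠ a) : ℝ) := by
      exact_mod_cast h1
    rw [hwS K hK1]
    linarith
  -- main computation
  have hQ := hfib (fun k => vv - σ (k+1))
  rw [hQ]
  rcases Nat.eq_zero_or_pos K with hK0 | hK1
  · -- K = 0
    rw [hK0, Finset.sum_range_one]
    have hw1pos : (0:ℝ) < w 1 := lt_of_lt_of_le one_pos (hwge 1 le_rfl)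
    set θ := (V 0 : ℝ) / w 1 with hθ
    have hθ0 : 0 ≤ θ := div_nonneg (Nat.cast_nonneg _) hw1pos.le
    have hθ1 : θ ≤ 1 := (div_le_one hw1pos).mpr hV0u
    have hθw : θ * w 1 = (V 0 : ℝ) := div_mul_cancel₀ _ hw1pos.ne'
    have hF1 := hF 1
    rw [Finset.sum_range_one, Finset.sum_range_one] at hF1
    have e1 : (V 0 : ℝ) * (vv - σ (0+1)) = θ * (w 1 * (vv - σ 1)) := by
      rw [← mul_assoc, hθw]
    have e2 : θ * (w 1 * (vv - σ 1)) ≤ θ * (η * w 1 + C) :=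
      mul_le_mul_of_nonneg_left hF1 hθ0
    have e3 : θ * (η * w 1 + C) = η * (θ * w 1) + θ * C := by ring
    have e4 : θ * C ≤ C := mul_le_of_le_one_left hC hθ1
    have hV0S : (V 0 : ℝ) ≤ (#S : ℝ) := by
      exact_mod_cast Finset.card_le_card (Finset.filter_subset _ S)
    have e5 : η * (V 0 : ℝ) ≤ η * ((#S : ℝ) + 1) :=
      mul_le_mul_of_nonneg_left (by linarith) hη
    have habs : 0 ≤ |vv| + 1 := by positivity
    rw [e1]
    rw [hθw] at e3
    linarith
  · -- K ≥ 1
    have hKs : K = (K-1)+1 := by omega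
    have hwK1 : (0:ℝ) < w (K+1) := lt_of_lt_of_le one_pos (hwge (K+1) (by omega))
    set θ := (V K : ℝ) / w (K+1) with hθ
    have hθ0 : 0 ≤ θ := div_nonneg (Nat.cast_nonneg _) hwK1.le
    have hθ1 : θ ≤ 1 := (div_le_one hwK1).mpr (hVKle hK1)
    have hθw : θ * w (K+1) = (V K : ℝ) := div_mul_cancel₀ _ hwK1.ne'
    have hmid : ∑ k ∈ range (K-1), (V (k+1) : ℝ) * (vv - σ (k+1+1))
        = ∑ k ∈ range (K-1), w (k+1+1) * (vv - σ (k+1+1)) := by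
      refine Finset.sum_congr rfl fun k hk => ?_
      have hk' := Finset.mem_range.mp hk
      rw [hVmid (k+1) (by omega) (by omega)]
    have hQ2 : ∑ k ∈ range (K+1), (V k : ℝ) * (vv - σ (k+1))
        = (V 0 : ℝ) * (vv - σ 1)
          + (∑ k ∈ range (K-1), w (k+1+1) * (vv - σ (k+1+1)))
          + (V K : ℝ) * (vv - σ (K+1)) := by
      rw [Finset.sum_range_succ]
      congr 1
      conv_lhs => rw [hKs]
      rw [Finset.sum_range_succ', hmid]
      norm_num
      ring
    have hFK : ∑ k ∈ range K, w (k+1) * (vv - σ (k+1))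
        = (∑ k ∈ range (K-1), w (k+1+1) * (vv - σ (k+1+1))) + w 1 * (vv - σ 1) := by
      conv_lhs => rw [hKs]
      rw [Finset.sum_range_succ']
    have hGK : ∑ k ∈ range K, w (k+1)
        = (∑ k ∈ range (K-1), w (k+1+1)) + w 1 := by
      conv_lhs => rw [hKs]
      rw [Finset.sum_range_succ']
    have hFK1 : ∑ k ∈ range (K+1), w (k+1) * (vv - σ (k+1))
        = (∑ k ∈ range K, w (k+1) * (vv - σ (k+1))) + w (K+1) * (vv - σ (K+1)) :=
      Finset.sum_range_succ _ _
    have hGK1 : ∑ k ∈ range (K+1), w (k+1)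
        = (∑ k ∈ range K, w (k+1)) + w (K+1) := Finset.sum_range_succ _ _
    have hSsum : (#S : ℝ) = (V 0 : ℝ) + (∑ k ∈ range (K-1), w (k+1+1)) + (V K : ℝ) := by
      have hcast : (#S : ℝ) = ∑ k ∈ range (K+1), (V k : ℝ) := by exact_mod_cast hMsum
      rw [hcast, Finset.sum_range_succ]
      congr 1
      conv_lhs => rw [hKs]
      rw [Finset.sum_range_succ']
      have hmid2 : ∑ k ∈ range (K-1), (V (k+1) : ℝ) = ∑ k ∈ range (K-1), w (k+1+1) := by
        refine Finset.sum_congr rfl fun k hk => ?_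
        have hk' := Finset.mem_range.mp hk
        rw [hVmid (k+1) (by omega) (by omega)]
      rw [hmid2]
      ring
    have hb1 : (1-θ) * (∑ k ∈ range K, w (k+1) * (vv - σ (k+1)))
        ≤ (1-θ) * (η * (∑ k ∈ range K, w (k+1)) + C) :=
      mul_le_mul_of_nonneg_left (hF K) (by linarith)
    have hb2 : θ * (∑ k ∈ range (K+1), w (k+1) * (vv - σ (k+1)))
        ≤ θ * (η * (∑ k ∈ range (K+1), w (k+1)) + C) :=
      mul_le_mul_of_nonneg_left (hF (K+1)) hθ0
    have hb3 : (1-θ) * (η * (∑ k ∈ range K, w (k+1)) + C)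
          + θ * (η * (∑ k ∈ range (K+1), w (k+1)) + C)
        = η * ((∑ k ∈ range K, w (k+1)) + (V K : ℝ)) + C := by
      rw [hGK1, ← hθw]
      ring
    have e1 : θ * ((∑ k ∈ range (K+1), w (k+1) * (vv - σ (k+1)))
          - (∑ k ∈ range K, w (k+1) * (vv - σ (k+1)))) = (V K : ℝ) * (vv - σ (K+1)) := by
      rw [hFK1, add_sub_cancel_left, ← mul_assoc, hθw]
    have habs' := abs_le.mp (hσ 1 le_rfl)
    have e2 : (V 0 : ℝ) * (vv - σ 1) - w 1 * (vv - σ 1) ≤ |vv| + 1 := by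
      have h1 : (V 0 : ℝ) - w 1 ≤ 0 := by linarith [hV0u]
      have h2 : w 1 - (V 0 : ℝ) ≤ 1 := by linarith [hV0l hK1]
      nlinarith [habs'.1, habs'.2, abs_nonneg vv]
    have hcard : (∑ k ∈ range K, w (k+1)) + (V K : ℝ) ≤ (#S : ℝ) + 1 := by
      rw [hGK, hSsum]
      linarith [hV0l hK1, hwge 1 le_rfl]
    have e5 : η * ((∑ k ∈ range K, w (k+1)) + (V K : ℝ)) ≤ η * ((#S : ℝ) + 1) :=
      mul_le_mul_of_nonneg_left hcard hη
    rw [hQ2]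
    linarith [hb1, hb2]


end Prop13

open Prop13 in
/-- **Proposition 13.**  Suppose every joint action `(a,b)` occurs infinitely often along
the play (time steps `t = 1, 2, …`).  If (i) the arithmetic averages `s̄_{ab}(m)` of the
payoff sequences satisfy `limsup |s̄_{ab}(m) − v a b| ≤ cε`, (ii) the weighted averages
satisfy `limsup |s̃_{ab}(m) − s̄_{ab}(m)| ≤ ε` (unbiased payoff observations), and
(iii) the observed average regret of player 1 satisfies `limsup R(T)/T ≤ ε`, then the
average regret with respect to the values `v` has `limsup ≤ 2(c+1)ε`; i.e. the choices of
player 1 are `2(c+1)ε`-Hannan consistent with respect to the matrix game `v`. -/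
theorem stmt_7 {A B : Type*} [Fintype A] [Fintype B] [Nonempty A] [Nonempty B]
    [DecidableEq A] [DecidableEq B]
    (i : ℕ → A) (j : ℕ → B)
    (hinf : ∀ (a : A) (b : B), {t : ℕ | 1 ≤ t ∧ i t = a ∧ j t = b}.Infinite)
    (ε c : ℝ) (hε : 0 ≤ ε) (hc : 0 ≤ c)
    (v : A → B → ℝ)
    (s : A → B → ℕ → ℝ)
    (hs : ∀ (a : A) (b : B) (m : ℕ), 1 ≤ m → s a b m ∈ Set.Icc (0 : ℝ) 1)
    -- `tstar a b m` is the time of the `m`-th occurrence of the joint action `(a,b)`,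
    -- with the convention `tstar a b 0 = 0`.
    (tstar : A → B → ℕ → ℕ)
    (htstar0 : ∀ a b, tstar a b 0 = 0)
    (htstar : ∀ (a : A) (b : B) (m : ℕ),
      tstar a b (m + 1) = Nat.nth (fun t => 1 ≤ t ∧ i t = a ∧ j t = b) m)
    -- the weights `w_{ab}(m)` for `m ≥ 1`
    (w : A → B → ℕ → ℝ)
    (hw : ∀ (a : A) (b : B) (m : ℕ), w a b (m + 1) = 1 +
      (((Finset.Icc (tstar a b m) (tstar a b (m + 1))).filter
        (fun u => j u = b ∧ i u ≠ a)).card : ℝ))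
    -- arithmetic and weighted averages of the payoff sequences
    (sbar stil : A → B → ℕ → ℝ)
    (hsbar : ∀ a b m, sbar a b m = (∑ k ∈ Finset.Icc 1 m, s a b k) / m)
    (hstil : ∀ a b m, stil a b m =
      (∑ k ∈ Finset.Icc 1 m, w a b k * s a b k) / (∑ k ∈ Finset.Icc 1 m, w a b k))
    -- the observed reward `x a t` of action `a` at time `t`
    (x : A → ℕ → ℝ)
    (hx : ∀ (a : A) (t : ℕ), x a t = s a (j t)
      ((((Finset.Icc 1 (t - 1)).filter (fun u => i u = a ∧ j u = j t)).card) + 1))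
    (hi : ∀ a b, limsup (fun m : ℕ => |sbar a b m - v a b|) atTop ≤ c * ε)
    (hii : ∀ a b, limsup (fun m : ℕ => |stil a b m - sbar a b m|) atTop ≤ ε)
    (hiii : limsup (fun T : ℕ =>
      ((univ.sup' univ_nonempty fun a => ∑ t ∈ Finset.Icc 1 T, x a t)
        - ∑ t ∈ Finset.Icc 1 T, x (i t) t) / T) atTop ≤ ε) :
    limsup (fun T : ℕ =>
      ((univ.sup' univ_nonempty fun a => ∑ t ∈ Finset.Icc 1 T, v a (j t))
        - ∑ t ∈ Finset.Icc 1 T, v (i t) (j t)) / T) atTop ≤ 2 * (c + 1) * ε := by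
  -- basic facts
  have hpinf : ∀ a b, (setOf (P i j a b)).Infinite := fun a b => hinf a b
  have hx' : ∀ a t, x a t = s a (j t) (Nat.count (P i j a (j t)) t + 1) := by
    intro a t
    rw [hx, count_P]
  have hxmem : ∀ a t, x a t ∈ Set.Icc (0:ℝ) 1 := fun a t => by
    rw [hx']; exact hs _ _ _ (by omega)
  have hsbar_mem : ∀ a b m, 1 ≤ m → sbar a b m ∈ Set.Icc (0:ℝ) 1 := by
    intro a b m hm
    have hmpos : (0:ℝ) < m := by exact_mod_cast hm
    have h0 : (0:ℝ) ≤ ∑ k ∈ Icc 1 m, s a b k :=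
      Finset.sum_nonneg fun k hk => (hs a b k (Finset.mem_Icc.mp hk).1).1
    have h1 : ∑ k ∈ Icc 1 m, s a b k ≤ (m:ℝ) := by
      calc ∑ k ∈ Icc 1 m, s a b k ≤ ∑ _k ∈ Icc 1 m, (1:ℝ) :=
            Finset.sum_le_sum fun k hk => (hs a b k (Finset.mem_Icc.mp hk).1).2
        _ = (m:ℝ) := by simp
    rw [hsbar]
    exact ⟨div_nonneg h0 hmpos.le, (div_le_one hmpos).mpr h1⟩
  have hsbar0 : ∀ a b, sbar a b 0 = 0 := by
    intro a b; rw [hsbar]; simp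
  have hstil0 : ∀ a b, stil a b 0 = 0 := by
    intro a b; rw [hstil]; simp
  have hwge1 : ∀ a b k, 1 ≤ k → (1:ℝ) ≤ w a b k := by
    intro a b k hk
    obtain ⟨k', rfl⟩ : ∃ k', k = k'+1 := ⟨k-1, by omega⟩
    rw [hw]
    have : (0:ℝ) ≤ (#((Icc (tstar a b k') (tstar a b (k'+1))).filter
        fun u => j u = b ∧ i u ≠ a) : ℝ) := Nat.cast_nonneg _
    linarith
  have hGge : ∀ (a : A) (b : B) (m : ℕ), (m:ℝ) ≤ ∑ k ∈ range m, w a b (k+1) := by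
    intro a b m
    calc (m:ℝ) = ∑ _k ∈ range m, (1:ℝ) := by simp
      _ ≤ ∑ k ∈ range m, w a b (k+1) :=
          Finset.sum_le_sum fun k _ => hwge1 a b (k+1) (by omega)
  have hGnn : ∀ (a : A) (b : B) (m : ℕ), (0:ℝ) ≤ ∑ k ∈ range m, w a b (k+1) := by
    intro a b m
    exact le_trans (by positivity) (hGge a b m)
  have hstil_mem : ∀ a b m, 1 ≤ m → stil a b m ∈ Set.Icc (0:ℝ) 1 := by
    intro a b m hm
    have hGpos : (0:ℝ) < ∑ k ∈ Icc 1 m, w a b k := by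
      rw [sum_Icc_one]
      calc (0:ℝ) < m := by exact_mod_cast hm
        _ ≤ _ := hGge a b m
    have h0 : (0:ℝ) ≤ ∑ k ∈ Icc 1 m, w a b k * s a b k :=
      Finset.sum_nonneg fun k hk => mul_nonneg
        (le_trans zero_le_one (hwge1 a b k (Finset.mem_Icc.mp hk).1))
        (hs a b k (Finset.mem_Icc.mp hk).1).1
    have h1 : ∑ k ∈ Icc 1 m, w a b k * s a b k ≤ ∑ k ∈ Icc 1 m, w a b k :=
      Finset.sum_le_sum fun k hk => by
        have hwk := hwge1 a b k (Finset.mem_Icc.mp hk).1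
        have hsk := hs a b k (Finset.mem_Icc.mp hk).1
        nlinarith [hsk.1, hsk.2]
    rw [hstil]
    exact ⟨div_nonneg h0 hGpos.le, (div_le_one hGpos).mpr h1⟩
  have hσab : ∀ a b k, 1 ≤ k → |v a b - s a b k| ≤ |v a b| + 1 := by
    intro a b k hk
    have hsk := hs a b k hk
    calc |v a b - s a b k| ≤ |v a b| + |s a b k| := abs_sub _ _
      _ ≤ |v a b| + 1 := by
          have : |s a b k| ≤ 1 := abs_le.mpr ⟨by linarith [hsk.1], hsk.2⟩
          linarith
  have hw0ab : ∀ a b, w a b 1 = 1 +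
      (#((Icc 0 (Nat.nth (P i j a b) 0)).filter fun u => j u = b ∧ i u ≠ a) : ℝ) := by
    intro a b
    have h := hw a b 0
    rw [htstar0, htstar] at h
    exact h
  have hwSab : ∀ a b k, 1 ≤ k → w a b (k+1) = 1 +
      (#((Icc (Nat.nth (P i j a b) (k-1)) (Nat.nth (P i j a b) k)).filter
        fun u => j u = b ∧ i u ≠ a) : ℝ) := by
    intro a b k hk
    obtain ⟨k', rfl⟩ : ∃ k', k = k'+1 := ⟨k-1, by omega⟩
    have h := hw a b (k'+1)
    rw [htstar a b k', htstar a b (k'+1)] at h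
    simp only [Nat.add_sub_cancel]
    exact h
  -- coboundedness of the goal sequence
  set Vm : ℝ := ∑ a : A, ∑ b : B, |v a b| with hVmdef
  have hVm0 : 0 ≤ Vm := Finset.sum_nonneg fun a _ =>
    Finset.sum_nonneg fun b _ => abs_nonneg _
  have hvab : ∀ a b, |v a b| ≤ Vm := by
    intro a b
    calc |v a b| ≤ ∑ b' : B, |v a b'| :=
          Finset.single_le_sum (f := fun b' => |v a b'|)
            (fun b' _ => abs_nonneg _) (mem_univ b)
      _ ≤ Vm := Finset.single_le_sum
          (f := fun a' => ∑ b' : B, |v a' b'|)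
          (fun a' _ => Finset.sum_nonneg fun b' _ => abs_nonneg _) (mem_univ a)
  have hglb : ∀ T : ℕ,
      -(2*Vm) ≤ ((univ.sup' univ_nonempty fun a => ∑ t ∈ Finset.Icc 1 T, v a (j t))
        - ∑ t ∈ Finset.Icc 1 T, v (i t) (j t)) / T := by
    intro T
    rcases Nat.eq_zero_or_pos T with hT0 | hT1
    · subst hT0
      simp only [Nat.cast_zero, div_zero]
      linarith
    · have hTpos : (0:ℝ) < T := by exact_mod_cast hT1
      rw [le_div_iff₀ hTpos]
      have hub : ∑ t ∈ Icc 1 T, v (i t) (j t) ≤ Vm * T := by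
        calc ∑ t ∈ Icc 1 T, v (i t) (j t) ≤ ∑ _t ∈ Icc 1 T, Vm :=
            Finset.sum_le_sum fun t _ => le_trans (le_abs_self _) (hvab _ _)
          _ = Vm * T := by rw [Finset.sum_const, Nat.card_Icc]; push_cast; ring
      have hlb : -(Vm * T) ≤ univ.sup' univ_nonempty fun a => ∑ t ∈ Finset.Icc 1 T, v a (j t) := by
        have a0 : A := Classical.arbitrary A
        refine le_trans ?_ (Finset.le_sup' _ (mem_univ a0))
        calc -(Vm * T) = ∑ _t ∈ Icc 1 T, -Vm := by
              rw [Finset.sum_const, Nat.card_Icc]; push_cast; ring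
          _ ≤ ∑ t ∈ Icc 1 T, v a0 (j t) :=
            Finset.sum_le_sum fun t _ => by
              have := hvab a0 (j t)
              have := neg_abs_le (v a0 (j t))
              linarith
      linarith
  have hcob : IsCoboundedUnder (· ≤ ·) atTop (fun T : ℕ =>
      ((univ.sup' univ_nonempty fun a => ∑ t ∈ Finset.Icc 1 T, v a (j t))
        - ∑ t ∈ Finset.Icc 1 T, v (i t) (j t)) / T) :=
    isCoboundedUnder_le_of_le atTop hglb
  -- main: for every positive δ the limsup is at most 2(c+1)ε + δ
  refine le_of_forall_pos_le_add ?_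
  intro δ hδ
  set δ' := δ/6 with hδ'def
  have hδ'pos : 0 < δ' := by positivity
  set η := (c+1)*ε + 2*δ' with hηdef
  have hη0 : 0 ≤ η := by
    have h1 : 0 ≤ (c+1)*ε := mul_nonneg (by linarith) hε
    rw [hηdef]; linarith
  -- per-pair constants
  have hkey : ∀ (a : A) (b : B), ∃ CM : ℝ, 0 ≤ CM ∧
      (∀ m : ℕ, ∑ k ∈ range m, w a b (k+1) * (v a b - s a b (k+1))
        ≤ η * (∑ k ∈ range m, w a b (k+1)) + CM) ∧
      ∃ M0 : ℕ, ∀ m, M0 ≤ m → |sbar a b m - v a b| ≤ c*ε + δ' := by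
    intro a b
    have hbd1 : IsBoundedUnder (· ≤ ·) atTop (fun m : ℕ => |sbar a b m - v a b|) := by
      refine isBoundedUnder_of ⟨|v a b| + 1, fun m => ?_⟩
      rcases Nat.eq_zero_or_pos m with h0 | h1
      · subst h0; rw [hsbar0]; simp
      · have hm := hsbar_mem a b m h1
        have : |sbar a b m| ≤ 1 := abs_le.mpr ⟨by linarith [hm.1], hm.2⟩
        calc |sbar a b m - v a b| ≤ |sbar a b m| + |v a b| := abs_sub _ _
          _ ≤ |v a b| + 1 := by linarith
    have hbd2 : IsBoundedUnder (· ≤ ·) atTop (fun m : ℕ => |stil a b m - sbar a b m|) := by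
      refine isBoundedUnder_of ⟨2, fun m => ?_⟩
      rcases Nat.eq_zero_or_pos m with h0 | h1
      · subst h0; rw [hsbar0, hstil0]; norm_num
      · have hm := hsbar_mem a b m h1
        have hm' := hstil_mem a b m h1
        have h2 : |sbar a b m| ≤ 1 := abs_le.mpr ⟨by linarith [hm.1], hm.2⟩
        have h3 : |stil a b m| ≤ 1 := abs_le.mpr ⟨by linarith [hm'.1], hm'.2⟩
        calc |stil a b m - sbar a b m| ≤ |stil a b m| + |sbar a b m| := abs_sub _ _
          _ ≤ 2 := by linarith
    have hev1 : ∀ᶠ m in atTop, |sbar a b m - v a b| < c*ε + δ' :=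
      eventually_lt_of_limsup_lt (lt_of_le_of_lt (hi a b) (by linarith)) hbd1
    have hev2 : ∀ᶠ m in atTop, |stil a b m - sbar a b m| < ε + δ' :=
      eventually_lt_of_limsup_lt (lt_of_le_of_lt (hii a b) (by linarith)) hbd2
    have hev3 : ∀ᶠ m in atTop, |stil a b m - v a b| ≤ η := by
      filter_upwards [hev1, hev2] with m h1 h2
      calc |stil a b m - v a b| ≤ |stil a b m - sbar a b m| + |sbar a b m - v a b| := by
            have := abs_sub_abs_le_abs_sub (stil a b m) (sbar a b m)
            calc |stil a b m - v a b|
                = |(stil a b m - sbar a b m) + (sbar a b m - v a b)| := by ring_nf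
              _ ≤ _ := abs_add_le _ _
        _ ≤ η := by rw [hηdef]; linarith
    obtain ⟨M1, hM1⟩ := eventually_atTop.mp hev3
    obtain ⟨M0, hM0⟩ := eventually_atTop.mp hev1
    set M' := max M1 1 with hM'def
    refine ⟨∑ k ∈ range M', w a b (k+1) * (|v a b| + 1), ?_, ?_, M0,
      fun m hm => (hM0 m hm).le⟩
    · exact Finset.sum_nonneg fun k _ => mul_nonneg
        (le_trans zero_le_one (hwge1 a b (k+1) (by omega))) (by positivity)
    · intro m
      by_cases hm : M' ≤ m
      · -- use the weighted-average bound
        have hm1 : 1 ≤ m := le_trans (le_max_right M1 1) hm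
        have hGpos : (0:ℝ) < ∑ k ∈ range m, w a b (k+1) := by
          calc (0:ℝ) < m := by exact_mod_cast hm1
            _ ≤ _ := hGge a b m
        have hst := hM1 m (le_trans (le_max_left M1 1) hm)
        rw [hstil, sum_Icc_one (fun k => w a b k * s a b k), sum_Icc_one (fun k => w a b k)] at hst
        have habs := (abs_le.mp hst).1
        -- v*G - num ≤ η*G
        have hkey2 : v a b * (∑ k ∈ range m, w a b (k+1))
            - (∑ k ∈ range m, w a b (k+1) * s a b (k+1))
            ≤ η * (∑ k ∈ range m, w a b (k+1)) := by
          have h2 : v a b - (∑ k ∈ range m, w a b (k+1) * s a b (k+1))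
              / (∑ k ∈ range m, w a b (k+1)) ≤ η := by linarith
          have h3 := mul_le_mul_of_nonneg_right h2 hGpos.le
          rw [sub_mul, div_mul_cancel₀ _ hGpos.ne'] at h3
          exact h3
        have hexp : ∑ k ∈ range m, w a b (k+1) * (v a b - s a b (k+1))
            = v a b * (∑ k ∈ range m, w a b (k+1))
              - ∑ k ∈ range m, w a b (k+1) * s a b (k+1) := by
          rw [Finset.mul_sum, ← Finset.sum_sub_distrib]
          exact Finset.sum_congr rfl fun k _ => by ring
        have hCnn : (0:ℝ) ≤ ∑ k ∈ range M', w a b (k+1) * (|v a b| + 1) :=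
          Finset.sum_nonneg fun k _ => mul_nonneg
            (le_trans zero_le_one (hwge1 a b (k+1) (by omega))) (by positivity)
        rw [hexp]
        linarith
      · -- small m: crude bound
        push_neg at hm
        have h1 : ∑ k ∈ range m, w a b (k+1) * (v a b - s a b (k+1))
            ≤ ∑ k ∈ range m, w a b (k+1) * (|v a b| + 1) :=
          Finset.sum_le_sum fun k _ => by
            have hw0 : (0:ℝ) ≤ w a b (k+1) :=
              le_trans zero_le_one (hwge1 a b (k+1) (by omega))
            have := hσab a b (k+1) (by omega)
            have := le_abs_self (v a b - s a b (k+1))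
            nlinarith
        have h2 : ∑ k ∈ range m, w a b (k+1) * (|v a b| + 1)
            ≤ ∑ k ∈ range M', w a b (k+1) * (|v a b| + 1) :=
          Finset.sum_le_sum_of_subset_of_nonneg
            (Finset.range_subset_range.mpr (by omega))
            (fun k _ _ => mul_nonneg
              (le_trans zero_le_one (hwge1 a b (k+1) (by omega))) (by positivity))
        have h3 : (0:ℝ) ≤ η * (∑ k ∈ range m, w a b (k+1)) :=
          mul_nonneg hη0 (hGnn a b m)
        linarith
  choose CM hCM0 hCMF M0 hM0 using hkey
  -- global constant
  set D : ℝ := (∑ a : A, ∑ b : B, (CM a b + (|v a b| + 1))) + η * (Fintype.card B) with hDdef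
  have hCabnn : ∀ a b, (0:ℝ) ≤ CM a b + (|v a b| + 1) := fun a b => by
    have := hCM0 a b; positivity
  have hD0 : 0 ≤ D := by
    rw [hDdef]
    have h1 : (0:ℝ) ≤ ∑ a : A, ∑ b : B, (CM a b + (|v a b| + 1)) :=
      Finset.sum_nonneg fun a _ => Finset.sum_nonneg fun b _ => hCabnn a b
    have h2 : (0:ℝ) ≤ η * (Fintype.card B) := mul_nonneg hη0 (by positivity)
    linarith
  -- Term 1: counterfactual bound, for every T and a
  have hterm1 : ∀ (T : ℕ) (a : A),
      ∑ t ∈ Icc 1 T, (v a (j t) - x a t) ≤ η * T + D := by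
    intro T a
    have hfib := Finset.sum_fiberwise_of_maps_to (g := j)
      (fun t (_ : t ∈ Icc 1 T) => mem_univ (j t)) (fun t => v a (j t) - x a t)
    rw [← hfib]
    have hperb : ∀ b : B, ∑ t ∈ (Icc 1 T).filter (fun t => j t = b), (v a (j t) - x a t)
        = ∑ t ∈ (Icc 1 T).filter (fun t => j t = b),
            (v a b - s a b (Nat.count (P i j a b) t + 1)) := by
      intro b
      refine Finset.sum_congr rfl fun t ht => ?_
      have hjt : j t = b := (Finset.mem_filter.mp ht).2
      rw [hx' a t, hjt]
    have hbound : ∀ b : B, ∑ t ∈ (Icc 1 T).filter (fun t => j t = b), (v a (j t) - x a t)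
        ≤ η * ((#((Icc 1 T).filter fun t => j t = b) : ℝ) + 1) + CM a b + (|v a b| + 1) := by
      intro b
      rw [hperb b]
      exact fiber_bound i j a b (hpinf a b) (s a b) (w a b) (v a b) η (CM a b)
        hη0 (hCM0 a b) (fun k hk => hwge1 a b k hk) (hσab a b)
        (hw0ab a b) (hwSab a b) (hCMF a b) T
    have hMsum : ∑ b : B, (#((Icc 1 T).filter fun t => j t = b) : ℝ) = T := by
      have := Finset.card_eq_sum_card_fiberwise (f := j)
        (fun t (_ : t ∈ Icc 1 T) => mem_univ (j t))
      have hcast : ((#(Icc 1 T) : ℕ) : ℝ) = ∑ b : B, (#((Icc 1 T).filter fun t => j t = b) : ℝ) := by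
        rw [this]; push_cast; rfl
      rw [← hcast, Nat.card_Icc]
      push_cast; ring
    calc ∑ b : B, ∑ t ∈ (Icc 1 T).filter (fun t => j t = b), (v a (j t) - x a t)
        ≤ ∑ b : B, (η * ((#((Icc 1 T).filter fun t => j t = b) : ℝ) + 1)
            + CM a b + (|v a b| + 1)) := Finset.sum_le_sum fun b _ => hbound b
      _ = η * (∑ b : B, (#((Icc 1 T).filter fun t => j t = b) : ℝ))
            + η * (Fintype.card B) + ∑ b : B, (CM a b + (|v a b| + 1)) := by
          rw [Finset.sum_add_distrib, Finset.sum_add_distrib, ← Finset.mul_sum]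
          simp only [mul_add, Finset.sum_add_distrib, Finset.mul_sum]
          rw [Finset.sum_const, card_univ]
          push_cast
          ring
      _ ≤ η * T + D := by
          rw [hMsum, hDdef]
          have h1 : ∑ b : B, (CM a b + (|v a b| + 1))
              ≤ ∑ a' : A, ∑ b : B, (CM a' b + (|v a' b| + 1)) :=
            Finset.single_le_sum (f := fun a' => ∑ b : B, (CM a' b + (|v a' b| + 1)))
              (fun a' _ => Finset.sum_nonneg fun b _ => hCabnn a' b) (mem_univ a)
          linarith
  -- actual-play sum identities
  have hA1 : ∀ T : ℕ, ∑ t ∈ Icc 1 T, x (i t) t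
      = ∑ a : A, ∑ b : B, ∑ k ∈ Icc 1 (Nat.count (P i j a b) (T+1)), s a b k := by
    intro T
    rw [← sum_actual i j s T]
    exact Finset.sum_congr rfl fun t _ => by rw [hx' (i t) t]
  have hA2 : ∀ T : ℕ, ∑ t ∈ Icc 1 T, v (i t) (j t)
      = ∑ a : A, ∑ b : B, (Nat.count (P i j a b) (T+1) : ℝ) * v a b := by
    intro T
    calc ∑ t ∈ Icc 1 T, v (i t) (j t)
        = ∑ a : A, ∑ b : B, ∑ _k ∈ Icc 1 (Nat.count (P i j a b) (T+1)), v a b := by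
          rw [← sum_actual i j (fun a b _ => v a b) T]
      _ = ∑ a : A, ∑ b : B, (Nat.count (P i j a b) (T+1) : ℝ) * v a b := by
          refine Finset.sum_congr rfl fun a _ => Finset.sum_congr rfl fun b _ => ?_
          rw [Finset.sum_const, Nat.card_Icc, Nat.add_sub_cancel, nsmul_eq_mul]
  have hNsum : ∀ T : ℕ, ∑ a : A, ∑ b : B, (Nat.count (P i j a b) (T+1) : ℝ) = T := by
    intro T
    have hcard := Finset.card_eq_sum_card_fiberwise (f := fun t => (i t, j t))
      (s := Icc 1 T) (t := univ) (fun t _ => mem_univ _)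
    have hfil : ∀ ab : A × B, #((Icc 1 T).filter fun t => (i t, j t) = ab)
        = Nat.count (P i j ab.1 ab.2) (T+1) := by
      intro ab
      rw [count_P]
      simp only [Nat.add_sub_cancel]
      congr 1
      ext t
      simp [Prod.ext_iff]
    calc ∑ a : A, ∑ b : B, (Nat.count (P i j a b) (T+1) : ℝ)
        = ∑ ab : A × B, (Nat.count (P i j ab.1 ab.2) (T+1) : ℝ) := by
          rw [Fintype.sum_prod_type]
      _ = ((#(Icc 1 T) : ℕ) : ℝ) := by
          rw [hcard]
          push_cast
          exact (Finset.sum_congr rfl fun ab _ => by rw [hfil ab]).symm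
      _ = T := by rw [Nat.card_Icc]; push_cast; ring
  -- Eventually facts
  have hEv1 : ∀ᶠ T : ℕ in atTop,
      ((univ.sup' univ_nonempty fun a => ∑ t ∈ Icc 1 T, x a t)
        - ∑ t ∈ Icc 1 T, x (i t) t) / T ≤ ε + δ' := by
    have hbd : IsBoundedUnder (· ≤ ·) atTop (fun T : ℕ =>
        ((univ.sup' univ_nonempty fun a => ∑ t ∈ Icc 1 T, x a t)
          - ∑ t ∈ Icc 1 T, x (i t) t) / T) := by
      refine isBoundedUnder_of ⟨1, fun T => ?_⟩
      rcases Nat.eq_zero_or_pos T with h0 | h1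
      · subst h0; simp
      · have hTpos : (0:ℝ) < T := by exact_mod_cast h1
        rw [div_le_one hTpos]
        have hsup : (univ.sup' univ_nonempty fun a => ∑ t ∈ Icc 1 T, x a t) ≤ T := by
          refine Finset.sup'_le _ _ fun a _ => ?_
          calc ∑ t ∈ Icc 1 T, x a t ≤ ∑ _t ∈ Icc 1 T, (1:ℝ) :=
                Finset.sum_le_sum fun t _ => (hxmem a t).2
            _ = T := by rw [Finset.sum_const, Nat.card_Icc]; push_cast; ring
        have hnn : 0 ≤ ∑ t ∈ Icc 1 T, x (i t) t :=
          Finset.sum_nonneg fun t _ => (hxmem (i t) t).1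
        linarith
    have hlt : limsup (fun T : ℕ =>
        ((univ.sup' univ_nonempty fun a => ∑ t ∈ Icc 1 T, x a t)
          - ∑ t ∈ Icc 1 T, x (i t) t) / T) atTop < ε + δ' :=
      lt_of_le_of_lt hiii (by linarith)
    filter_upwards [eventually_lt_of_limsup_lt hlt hbd] with T hT
    exact hT.le
  have hEv2 : ∀ᶠ T : ℕ in atTop, ∀ (a : A) (b : B),
      max (M0 a b) 1 ≤ Nat.count (P i j a b) (T+1) := by
    refine eventually_atTop.mpr ⟨Finset.univ.sup
      (fun ab : A × B => Nat.nth (P i j ab.1 ab.2) (max (M0 ab.1 ab.2) 1)), fun T hT a b => ?_⟩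
    have hle : Nat.nth (P i j a b) (max (M0 a b) 1) ≤ T :=
      le_trans (Finset.le_sup (f := fun ab : A × B =>
        Nat.nth (P i j ab.1 ab.2) (max (M0 ab.1 ab.2) 1)) (mem_univ (a, b))) hT
    have h2 := (Nat.lt_nth_iff_count_lt (hpinf a b)).mpr
      (show Nat.nth (P i j a b) (max (M0 a b) 1) < T+1 by omega)
    omega
  have hEv3 : ∀ᶠ T : ℕ in atTop, D ≤ δ' * T := by
    refine eventually_atTop.mpr ⟨⌈D / δ'⌉₊, fun T hT => ?_⟩
    have h1 : D / δ' ≤ T := le_trans (Nat.le_ceil _) (by exact_mod_cast hT)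
    calc D = (D / δ') * δ' := by field_simp
      _ ≤ T * δ' := mul_le_mul_of_nonneg_right h1 hδ'pos.le
      _ = δ' * T := mul_comm _ _
  -- conclusion
  refine Filter.limsup_le_of_le hcob ?_
  filter_upwards [hEv1, hEv2, hEv3, eventually_ge_atTop 1] with T hT1 hT2 hT3 hT4
  have hTpos : (0:ℝ) < T := by exact_mod_cast hT4
  rw [div_le_iff₀ hTpos]
  have hR : (univ.sup' univ_nonempty fun a => ∑ t ∈ Icc 1 T, x a t)
      - ∑ t ∈ Icc 1 T, x (i t) t ≤ (ε + δ') * T := by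
    have := (div_le_iff₀ hTpos).mp hT1
    linarith
  have hterm3 : ∑ t ∈ Icc 1 T, x (i t) t - ∑ t ∈ Icc 1 T, v (i t) (j t)
      ≤ (c*ε + δ') * T := by
    rw [hA1 T, hA2 T]
    have hper : ∀ (a : A) (b : B),
        (∑ k ∈ Icc 1 (Nat.count (P i j a b) (T+1)), s a b k)
          - (Nat.count (P i j a b) (T+1) : ℝ) * v a b
        ≤ (Nat.count (P i j a b) (T+1) : ℝ) * (c*ε + δ') := by
      intro a b
      set N := Nat.count (P i j a b) (T+1) with hNdef
      have hN1 : 1 ≤ N := le_trans (le_max_right _ 1) (hT2 a b)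
      have hNM : M0 a b ≤ N := le_trans (le_max_left _ 1) (hT2 a b)
      have hNpos : (0:ℝ) < N := by exact_mod_cast hN1
      have hsum : ∑ k ∈ Icc 1 N, s a b k = sbar a b N * N := by
        rw [hsbar, div_mul_cancel₀ _ hNpos.ne']
      have h1 := (abs_le.mp (hM0 a b N hNM)).2
      rw [hsum]
      calc sbar a b N * N - (N:ℝ) * v a b = (sbar a b N - v a b) * N := by ring
        _ ≤ (c*ε + δ') * N := mul_le_mul_of_nonneg_right h1 hNpos.le
        _ = (N:ℝ) * (c*ε + δ') := by ring
    calc (∑ a : A, ∑ b : B, ∑ k ∈ Icc 1 (Nat.count (P i j a b) (T+1)), s a b k)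
          - ∑ a : A, ∑ b : B, (Nat.count (P i j a b) (T+1) : ℝ) * v a b
        = ∑ a : A, ∑ b : B, ((∑ k ∈ Icc 1 (Nat.count (P i j a b) (T+1)), s a b k)
            - (Nat.count (P i j a b) (T+1) : ℝ) * v a b) := by
          rw [← Finset.sum_sub_distrib]
          exact Finset.sum_congr rfl fun a _ => by rw [← Finset.sum_sub_distrib]
      _ ≤ ∑ a : A, ∑ b : B, (Nat.count (P i j a b) (T+1) : ℝ) * (c*ε + δ') :=
          Finset.sum_le_sum fun a _ => Finset.sum_le_sum fun b _ => hper a b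
      _ = (∑ a : A, ∑ b : B, (Nat.count (P i j a b) (T+1) : ℝ)) * (c*ε + δ') := by
          rw [Finset.sum_mul]
          exact Finset.sum_congr rfl fun a _ => by rw [Finset.sum_mul]
      _ = (c*ε + δ') * T := by rw [hNsum T]; ring
  have hsupv : (univ.sup' univ_nonempty fun a => ∑ t ∈ Icc 1 T, v a (j t))
      ≤ (η * T + D) + (univ.sup' univ_nonempty fun a => ∑ t ∈ Icc 1 T, x a t) := by
    refine Finset.sup'_le _ _ fun a _ => ?_
    have h1 := hterm1 T a
    have h2 : ∑ t ∈ Icc 1 T, x a t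
        ≤ univ.sup' univ_nonempty fun a => ∑ t ∈ Icc 1 T, x a t :=
      Finset.le_sup' (f := fun a => ∑ t ∈ Icc 1 T, x a t) (mem_univ a)
    have h3 : ∑ t ∈ Icc 1 T, v a (j t)
        = (∑ t ∈ Icc 1 T, (v a (j t) - x a t)) + ∑ t ∈ Icc 1 T, x a t := by
      rw [← Finset.sum_add_distrib]
      exact Finset.sum_congr rfl fun t _ => by ring
    linarith
  have hδ6 : δ = 6 * δ' := by rw [hδ'def]; ring
  have hδT : 0 ≤ δ' * T := mul_nonneg hδ'pos.le hTpos.le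
  have hηT : η * T = ((c+1)*ε + 2*δ') * T := by rw [hηdef]
  rw [hδ6]
  linarith [hR, hterm3, hsupv, hT3]
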